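/- Let μ be a Radon measure on ℝ^n, n ≥ 1, with the following property: there exists a convex body K such that, for every x, y, z ∈ ℝ^n and every r ∈ (0,1), μ(rK+z) + μ(rK+z+x+y) ≥ μ(rK+z+x) + μ(rK+z+y) (where rK+z+x means the translate of the dilate rK by z+x). Then μ is a constant multiple of the Lebesgue measure. -/

import Mathlib

open MeasureTheory Set Filter Topology Pointwise
open scoped ENNReal NNReal

noncomputable section

/-- A convex body in `ℝⁿ`: a compact convex set with nonempty interior. -/
def IsConvexBody {n : ℕ} (K : Set (EuclideanSpace ℝ (Fin n))) : Prop :=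
  Convex ℝ K ∧ IsCompact K ∧ (interior K).Nonempty

variable {n : ℕ}

lemma jensen_nonneg_const {E : Type*} [AddCommGroup E] (g : E → ℝ)
    (heq : ∀ z x : E, g (z + x) + g (z - x) = 2 * g z)
    (hb : ∀ z, 0 ≤ g z) (z : E) : g z = g 0 := by
  set h : E → ℝ := fun w => g w - g 0 with hh
  have h0 : h 0 = 0 := by simp [hh]
  have heq' : ∀ z x, h (z + x) + h (z - x) = 2 * h z := by
    intro z x; simp only [hh]; have := heq z x; ring_nf; linarith
  have hodd : ∀ x, h x + h (-x) = 0 := by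
    intro x; have := heq' 0 x; simpa [h0, zero_add, zero_sub] using this
  have hadd : ∀ a b, h (a + b) = h a + h b := by
    intro a b
    have h1 := heq' a b
    have h2 := heq' b a
    have h3 := hodd (a - b)
    have : b - a = -(a - b) := by abel
    rw [this] at h2
    have hab : b + a = a + b := by abel
    rw [hab] at h2
    linarith
  have hsmul : ∀ (m : ℕ) (x : E), h ((m : ℕ) • x) = m * h x := by
    intro m x
    induction m with
    | zero => simpa using h0
    | succ k ih =>
      rw [succ_nsmul, hadd, ih]; push_cast; ring
  have hnn : ∀ x, 0 ≤ h x := by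
    intro x
    by_contra hx
    push_neg at hx
    obtain ⟨m, hm⟩ := exists_nat_gt (g 0 / (-(h x)))
    have hg0 : (0:ℝ) ≤ g 0 := hb 0
    have hm0 : (0:ℝ) < m := lt_of_le_of_lt (div_nonneg hg0 (by linarith)) hm
    have hlow : -(g 0) ≤ h ((m : ℕ) • x) := by
      have := hb ((m : ℕ) • x); simp only [hh]; linarith
    rw [hsmul] at hlow
    have : g 0 / (-(h x)) < m := hm
    have h2 : g 0 < (m : ℝ) * (-(h x)) := by
      rwa [div_lt_iff₀ (by linarith)] at this
    nlinarith
  have := hodd z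
  have h1 := hnn z
  have h2 := hnn (-z)
  have : h z = 0 := by linarith
  simpa [hh, sub_eq_zero] using this



lemma measure_translate_const (μ : Measure (EuclideanSpace ℝ (Fin n)))
    [IsLocallyFiniteMeasure μ]
    (Q : Set (EuclideanSpace ℝ (Fin n))) (hQ : IsCompact Q)
    (hsup : ∀ x y z : EuclideanSpace ℝ (Fin n),
      μ (Q + {z + x}) + μ (Q + {z + y}) ≤ μ (Q + {z}) + μ (Q + {z + x + y}))
    (z w : EuclideanSpace ℝ (Fin n)) : μ (Q + {z}) = μ (Q + {w}) := by
  set f : EuclideanSpace ℝ (Fin n) → ℝ≥0∞ := fun z => μ (Q + {z}) with hf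
  have hfin : ∀ z, f z ≠ ⊤ := by
    intro z
    exact (hQ.add isCompact_singleton).measure_lt_top.ne
  have heqE : ∀ z x, f (z + x) + f (z - x) = f z + f z := by
    intro z x
    have le1 := hsup x (-x) z
    rw [add_neg_cancel_right, ← sub_eq_add_neg] at le1
    have le2 := hsup x x (z - x)
    rw [sub_add_cancel] at le2
    rw [add_comm (μ (Q + {z - x}))] at le2
    exact le_antisymm le1 le2
  have heqR : ∀ z x, (fun w => (f w).toReal) (z + x) + (fun w => (f w).toReal) (z - x)
      = 2 * (fun w => (f w).toReal) z := by
    intro z x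
    have := heqE z x
    have h1 : ((f (z+x)) + (f (z-x))).toReal = ((f z) + (f z)).toReal := by rw [this]
    rw [ENNReal.toReal_add (hfin _) (hfin _), ENNReal.toReal_add (hfin _) (hfin _)] at h1
    simpa [two_mul] using h1
  have := jensen_nonneg_const (fun w => (f w).toReal) heqR (fun z => ENNReal.toReal_nonneg) z
  have hw := jensen_nonneg_const (fun w => (f w).toReal) heqR (fun z => ENNReal.toReal_nonneg) w
  have : (f z).toReal = (f w).toReal := by rw [this, hw]
  exact (ENNReal.toReal_eq_toReal_iff' (hfin z) (hfin w)).mp this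

lemma key_integral (μ : Measure (EuclideanSpace ℝ (Fin n))) [SigmaFinite μ]
    {S Q : Set (EuclideanSpace ℝ (Fin n))} (hS : MeasurableSet S) (hQ : MeasurableSet Q) :
    ∫⁻ z, μ (S ∩ (Q + {z})) ∂volume = μ S * volume Q := by
  have hmem : ∀ z x : EuclideanSpace ℝ (Fin n), x ∈ Q + {z} ↔ x - z ∈ Q := by
    intro z x
    simp only [Set.add_singleton, Set.mem_image]
    constructor
    · rintro ⟨a, ha, rfl⟩; simpa [add_sub_cancel_right] using ha
    · intro h; exact ⟨x - z, h, by abel⟩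
  have hset : ∀ z : EuclideanSpace ℝ (Fin n), Q + {z} = (fun x => x - z) ⁻¹' Q := by
    intro z; ext x; simp [hmem z x, Set.mem_preimage, sub_eq_add_neg]
  have hQz : ∀ z : EuclideanSpace ℝ (Fin n), MeasurableSet (Q + {z}) := by
    intro z; rw [hset]; exact hQ.preimage (measurable_id.sub measurable_const)
  calc ∫⁻ z, μ (S ∩ (Q + {z})) ∂volume
      = ∫⁻ z, ∫⁻ x, S.indicator 1 x * Q.indicator 1 (x - z) ∂μ ∂volume := by
        refine lintegral_congr fun z => ?_
        rw [← lintegral_indicator_one (hS.inter (hQz z))]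
        refine lintegral_congr fun x => ?_
        rw [Set.inter_indicator_one]
        simp only [Pi.mul_apply]
        congr 1
        by_cases h : x - z ∈ Q
        · simp [Set.indicator_apply, Set.mem_preimage, ← sub_eq_add_neg, h]
        · simp [Set.indicator_apply, Set.mem_preimage, ← sub_eq_add_neg, h]
    _ = ∫⁻ x, ∫⁻ z, S.indicator 1 x * Q.indicator 1 (x - z) ∂volume ∂μ := by
        apply lintegral_lintegral_swap
        apply Measurable.aemeasurable
        exact ((measurable_one.indicator hS).comp measurable_snd).mul
          ((measurable_one.indicator hQ).comp (measurable_snd.sub measurable_fst))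
    _ = ∫⁻ x, S.indicator 1 x * volume Q ∂μ := by
        refine lintegral_congr fun x => ?_
        have hm : Measurable fun z : EuclideanSpace ℝ (Fin n) =>
            Q.indicator (1 : EuclideanSpace ℝ (Fin n) → ℝ≥0∞) (x - z) :=
          (measurable_one.indicator hQ).comp (measurable_const.sub measurable_id)
        rw [lintegral_const_mul _ hm]
        congr 1
        have hpre : MeasurableSet ((fun z : EuclideanSpace ℝ (Fin n) => x - z) ⁻¹' Q) :=
          hQ.preimage (measurable_const.sub measurable_id)
        have h1 : ∫⁻ z, Q.indicator (1 : EuclideanSpace ℝ (Fin n) → ℝ≥0∞) (x - z) ∂volume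
            = volume ((fun z : EuclideanSpace ℝ (Fin n) => x - z) ⁻¹' Q) := by
          rw [← lintegral_indicator_one hpre]
          refine lintegral_congr fun z => ?_
          by_cases h : x - z ∈ Q <;> simp [Set.indicator_apply, h]
        rw [h1]
        have h2 : (fun z : EuclideanSpace ℝ (Fin n) => x - z) ⁻¹' Q
            = Neg.neg ⁻¹' ((fun z => x + z) ⁻¹' Q) := by
          ext z; simp [sub_eq_add_neg]
        rw [h2, Measure.measure_preimage_neg, measure_preimage_add]
    _ = μ S * volume Q := by
        rw [lintegral_mul_const _ (measurable_one.indicator hS), lintegral_indicator_one hS]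

lemma compact_le_translate (hn : 1 ≤ n) (μ : Measure (EuclideanSpace ℝ (Fin n)))
    [IsLocallyFiniteMeasure μ] [μ.Regular]
    (K : Set (EuclideanSpace ℝ (Fin n))) (hconv : Convex ℝ K) (hcomp : IsCompact K)
    (h0 : 0 ∈ interior K)
    (hconst : ∀ r : ℝ, r ∈ Ioo (0:ℝ) 1 → ∀ z w, μ (r • K + {z}) = μ (r • K + {w}))
    (C U : Set (EuclideanSpace ℝ (Fin n))) (hC : IsCompact C) (hU : IsOpen U) (hCU : C ⊆ U)
    (v : EuclideanSpace ℝ (Fin n)) : μ C ≤ μ (U + {v}) := by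
  classical
  rcases C.eq_empty_or_nonempty with rfl | hCne
  · simp
  have h0K : (0 : EuclideanSpace ℝ (Fin n)) ∈ K := interior_subset h0
  -- radii
  set r : ℕ → ℝ := fun j => 1 / (j + 2) with hr
  have hrpos : ∀ j, 0 < r j := by
    intro j; positivity
  have hrIoo : ∀ j, r j ∈ Ioo (0:ℝ) 1 := by
    intro j
    refine ⟨hrpos j, ?_⟩
    rw [hr]
    rw [div_lt_one (by positivity)]
    have : (0:ℝ) ≤ (j:ℝ) := Nat.cast_nonneg j
    linarith
  have hranti : ∀ {i j : ℕ}, i ≤ j → r j ≤ r i := by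
    intro i j hij
    apply one_div_le_one_div_of_le (by positivity)
    have : (i:ℝ) ≤ (j:ℝ) := Nat.cast_le.mpr hij
    linarith
  -- the homothets
  set Q : ℕ → Set (EuclideanSpace ℝ (Fin n)) := fun j => r j • K with hQ
  have hQcomp : ∀ j, IsCompact (Q j) := fun j => hcomp.smul (r j)
  have hQconv : ∀ j, Convex ℝ (Q j) := fun j => hconv.smul (r j)
  have hQ0 : ∀ j, (0 : EuclideanSpace ℝ (Fin n)) ∈ Q j :=
    fun j => ⟨0, h0K, smul_zero _⟩
  have hQmeas : ∀ j, MeasurableSet (Q j) := fun j => (hQcomp j).measurableSet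
  have hQmono : ∀ {i j : ℕ}, i ≤ j → Q j ⊆ Q i := by
    intro i j hij x hx
    obtain ⟨k, hk, rfl⟩ := hx
    show r j • k ∈ Q i
    have h1 : r j • k = (r j / r i) • ((r i) • k) := by
      rw [smul_smul, div_mul_cancel₀]
      exact (hrpos i).ne'
    rw [h1]
    refine (hQconv i).smul_mem_of_zero_mem (hQ0 i) (Set.smul_mem_smul_set hk) ?_
    constructor
    · positivity
    · rw [div_le_one (hrpos i)]
      exact hranti hij
  have hQvolpos : ∀ j, 0 < volume (Q j) := by
    intro j
    apply Measure.measure_pos_of_nonempty_interior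
    have : interior (Q j) = r j • interior K := by
      rw [hQ]; exact interior_smul₀ (hrpos j).ne' K
    rw [this]
    exact ⟨r j • 0, Set.smul_mem_smul_set h0⟩
  have hQvolfin : ∀ j, volume (Q j) < ⊤ := fun j => (hQcomp j).measure_lt_top
  -- bounded
  obtain ⟨R, hR⟩ := hcomp.isBounded.subset_ball 0
  have hQball : ∀ j (z : EuclideanSpace ℝ (Fin n)), Q j + {z} ⊆ Metric.ball z (r j * (R + 1)) := by
    intro j z x hx
    obtain ⟨q, hq, w, hw, rfl⟩ := hx
    obtain ⟨k, hk, rfl⟩ := hq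
    rw [Set.mem_singleton_iff] at hw
    subst hw
    have hk' : ‖k‖ < R := by simpa [Metric.mem_ball] using hR hk
    have hR0 : (0:ℝ) ≤ R := le_of_lt (lt_of_le_of_lt (norm_nonneg k) hk')
    simp only [Metric.mem_ball, dist_eq_norm, add_sub_cancel_right, norm_smul,
      Real.norm_eq_abs, abs_of_pos (hrpos j)]
    calc r j * ‖k‖ ≤ r j * R := by nlinarith [hrpos j]
    _ < r j * (R + 1) := by nlinarith [hrpos j]
  -- constants
  set c : ℕ → ℝ≥0∞ := fun j => μ (Q j + {0}) with hc
  have hconst' : ∀ j z, μ (Q j + {z}) = c j := fun j z => hconst (r j) (hrIoo j) z 0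
  -- upper bound for compacts
  have upper : ∀ j, μ C * volume (Q j) ≤ c j * volume (C - Q j) := by
    intro j
    rw [← key_integral μ hC.measurableSet (hQmeas j)]
    have hCQ : MeasurableSet (C - Q j) := by
      rw [sub_eq_add_neg]
      exact (hC.add (hQcomp j).neg).measurableSet
    rw [← lintegral_indicator_const hCQ (c j)]
    refine lintegral_mono fun z => ?_
    by_cases hz : z ∈ C - Q j
    · rw [Set.indicator_of_mem hz]
      exact le_trans (measure_mono Set.inter_subset_right) (hconst' j z).le
    · rw [Set.indicator_of_notMem hz]
      have : C ∩ (Q j + {z}) = ∅ := by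
        ext x
        simp only [Set.mem_inter_iff, Set.mem_empty_iff_false, iff_false, not_and]
        intro hxC hxQ
        obtain ⟨q, hq, s, hs, rfl⟩ := hxQ
        rw [Set.mem_singleton_iff] at hs
        subst hs
        exact hz (by simpa [add_sub_cancel_left] using Set.sub_mem_sub hxC hq)
      rw [this, measure_empty]
  -- lower bound for opens
  have lower : ∀ j (V : Set (EuclideanSpace ℝ (Fin n))), IsOpen V →
      c j * volume {z | Q j + {z} ⊆ V} ≤ μ V * volume (Q j) := by
    intro j V hV
    have hWopen : IsOpen {z | Q j + {z} ⊆ V} := by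
      rw [Metric.isOpen_iff]
      intro z hz
      obtain ⟨ε, hε, hthick⟩ :=
        ((hQcomp j).add isCompact_singleton).exists_thickening_subset_open hV hz
      refine ⟨ε, hε, fun w hw => ?_⟩
      intro x hx
      apply hthick
      obtain ⟨q, hq, s, hs, rfl⟩ := hx
      rw [Set.mem_singleton_iff] at hs; subst hs
      rw [Metric.mem_thickening_iff]
      refine ⟨q + z, ⟨q, hq, z, rfl, rfl⟩, ?_⟩
      rw [dist_eq_norm]
      simpa [dist_eq_norm] using hw
    rw [← key_integral μ hV.measurableSet (hQmeas j),
      ← lintegral_indicator_const hWopen.measurableSet (c j)]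
    refine lintegral_mono fun z => ?_
    by_cases hz : z ∈ {w | Q j + {w} ⊆ V}
    · rw [Set.indicator_of_mem hz, Set.inter_eq_self_of_subset_right hz, hconst' j z]
    · rw [Set.indicator_of_notMem hz]
      exact zero_le
  -- R is positive
  have hRpos : (0:ℝ) < R := by
    have := hR h0K
    simpa [Metric.mem_ball] using this
  -- the inner core sets of an open set V
  set W : Set (EuclideanSpace ℝ (Fin n)) → ℕ → Set (EuclideanSpace ℝ (Fin n)) :=
    fun V j => {z | Q j + {z} ⊆ V} with hWdef
  have hWmono : ∀ (V) {i j : ℕ}, i ≤ j → W V i ⊆ W V j := by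
    intro V i j hij z hz
    exact fun x hx => hz (Set.add_subset_add_right (hQmono hij) hx)
  have hWunion : ⋃ j, W U j = U := by
    apply Set.Subset.antisymm
    · refine Set.iUnion_subset fun j z hz => ?_
      have : (0 : EuclideanSpace ℝ (Fin n)) + z ∈ Q j + {z} :=
        Set.add_mem_add (hQ0 j) (Set.mem_singleton z)
      rw [zero_add] at this
      exact hz this
    · intro z hz
      rw [Metric.isOpen_iff] at hU
      obtain ⟨ε, hε, hball⟩ := hU z hz
      obtain ⟨m, hm⟩ := exists_nat_gt ((R + 1) / ε)
      refine Set.mem_iUnion.mpr ⟨m, fun x hx => hball ?_⟩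
      have h1 := hQball m z hx
      have h2 : r m * (R + 1) < ε := by
        have hm2 : R + 1 < ((m:ℝ) + 2) * ε := by
          rw [div_lt_iff₀ hε] at hm
          have : (0:ℝ) ≤ (m:ℝ) := Nat.cast_nonneg m
          nlinarith
        rw [hr]
        rw [div_mul_eq_mul_div, one_mul, div_lt_iff₀ (by positivity)]
        nlinarith
      exact Metric.ball_subset_ball h2.le h1
  have hWvol : Tendsto (fun j => volume (W U j)) atTop (𝓝 (volume U)) := by
    have h := tendsto_measure_iUnion_atTop (μ := volume) (s := fun j => W U j)
      (fun i j hij => hWmono U hij)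
    rw [hWunion] at h
    exact h
  -- C - Q j decreases to C
  have hCQanti : ∀ {i j : ℕ}, i ≤ j → C - Q j ⊆ C - Q i := by
    intro i j hij
    exact Set.sub_subset_sub_left (hQmono hij)
  have hCQmeas : ∀ j, MeasurableSet (C - Q j) := by
    intro j
    rw [sub_eq_add_neg]
    exact (hC.add (hQcomp j).neg).measurableSet
  have hCQinter : ⋂ j, (C - Q j) = C := by
    apply Set.Subset.antisymm
    · intro x hx
      rw [← hC.isClosed.closure_eq]
      rw [Metric.mem_closure_iff]
      intro ε hε
      obtain ⟨m, hm⟩ := exists_nat_gt (R / ε)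
      have hxm := Set.mem_iInter.mp hx m
      obtain ⟨cc, hcc, q, hq, rfl⟩ := hxm
      refine ⟨cc, hcc, ?_⟩
      rw [dist_eq_norm, sub_sub_cancel_left, norm_neg]
      obtain ⟨k, hk, rfl⟩ := hq
      have hk' : ‖k‖ < R := by simpa [Metric.mem_ball] using hR hk
      rw [norm_smul, Real.norm_eq_abs, abs_of_pos (hrpos m)]
      have h2 : r m * R < ε := by
        rw [hr]
        have hm2 : R / ε < (m:ℝ) + 2 := by
          have : (0:ℝ) ≤ (m:ℝ) := Nat.cast_nonneg m
          linarith
        rw [div_mul_eq_mul_div, one_mul, div_lt_iff₀ (by positivity)]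
        rw [div_lt_iff₀ hε] at hm2
        linarith [hm2]
      calc r m * ‖k‖ ≤ r m * R := by nlinarith [hrpos m]
      _ < ε := h2
    · intro x hx
      refine Set.mem_iInter.mpr fun j => ?_
      have := Set.sub_mem_sub hx (hQ0 j)
      rwa [sub_zero] at this
  have hCQvol : Tendsto (fun j => volume (C - Q j)) atTop (𝓝 (volume C)) := by
    have h := tendsto_measure_iInter_atTop (μ := volume) (s := fun j => C - Q j)
      (fun j => (hCQmeas j).nullMeasurableSet) (fun i j hij => hCQanti hij)
      ⟨0, by show volume (C - Q 0) ≠ ⊤; rw [sub_eq_add_neg]; exact (hC.add (hQcomp 0).neg).measure_lt_top.ne⟩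
    rw [hCQinter] at h
    exact h
  -- volume C < volume U
  haveI : Nonempty (Fin n) := ⟨⟨0, hn⟩⟩
  have hCU' : volume C < volume U := by
    have hfin : volume C ≠ ⊤ := hC.measure_lt_top.ne
    have hdiff : (U \ C).Nonempty := by
      by_contra hdc
      rw [Set.not_nonempty_iff_eq_empty, Set.diff_eq_empty] at hdc
      have hUC : U = C := Set.Subset.antisymm hdc hCU
      have hclopen : IsClopen U := ⟨hUC ▸ hC.isClosed, hU⟩
      haveI : PreconnectedSpace (EuclideanSpace ℝ (Fin n)) :=
        ⟨(convex_univ : Convex ℝ (Set.univ : Set (EuclideanSpace ℝ (Fin n)))).isPreconnected⟩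
      have : U = univ := hclopen.eq_univ (hUC ▸ hCne)
      have : IsCompact (univ : Set (EuclideanSpace ℝ (Fin n))) := this ▸ (hUC ▸ hC)
      exact this.ne_univ rfl
    have hpos : 0 < volume (U \ C) :=
      (hU.sdiff hC.isClosed).measure_pos volume hdiff
    have key : volume (U ∩ C) + volume (U \ C) = volume U :=
      measure_inter_add_diff U hC.measurableSet
    rw [Set.inter_eq_right.mpr hCU] at key
    rw [← key]
    exact ENNReal.lt_add_right hfin hpos.ne'
  -- choose a good index
  obtain ⟨j₀, hj₀⟩ := (hWvol.eventually_const_lt hCU').exists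
  obtain ⟨j₁, hj₁⟩ := (hCQvol.eventually_lt_const hj₀).exists
  set j := max j₀ j₁ with hj
  have hvolWU : volume (C - Q j) < volume (W U j) := by
    calc volume (C - Q j) ≤ volume (C - Q j₁) := measure_mono (hCQanti (le_max_right _ _))
    _ < volume (W U j₀) := hj₁
    _ ≤ volume (W U j) := measure_mono (hWmono U (le_max_left _ _))
  -- translate
  have hUv : IsOpen (U + ({v} : Set (EuclideanSpace ℝ (Fin n)))) := hU.add_right
  have hWtrans : volume (W U j) ≤ volume (W (U + {v}) j) := by
    have himg : (fun z => z + v) '' (W U j) ⊆ W (U + {v}) j := by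
      rintro _ ⟨z, hz, rfl⟩
      intro x hx
      obtain ⟨q, hq, s, hs, rfl⟩ := hx
      rw [Set.mem_singleton_iff] at hs; subst hs
      have : q + z ∈ U := hz (Set.add_mem_add hq (Set.mem_singleton z))
      exact ⟨q + z, this, v, Set.mem_singleton v, by abel⟩
    calc volume (W U j) = volume ((fun z => z + v) '' (W U j)) := by
          rw [Set.image_add_right, measure_preimage_add_right]
    _ ≤ volume (W (U + {v}) j) := measure_mono himg
  -- the chain
  have chain : μ C * volume (Q j) ≤ μ (U + {v}) * volume (Q j) := by
    calc μ C * volume (Q j) ≤ c j * volume (C - Q j) := upper j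
    _ ≤ c j * volume (W (U + {v}) j) := by
        apply mul_le_mul_right
        exact le_trans hvolWU.le hWtrans
    _ ≤ μ (U + {v}) * volume (Q j) := lower j (U + {v}) hUv
  exact (ENNReal.mul_le_mul_iff_left (hQvolpos j).ne' (hQvolfin j).ne).mp chain

lemma compact_translate_eq (hn : 1 ≤ n) (μ : Measure (EuclideanSpace ℝ (Fin n)))
    [IsLocallyFiniteMeasure μ] [μ.Regular]
    (K : Set (EuclideanSpace ℝ (Fin n))) (hconv : Convex ℝ K) (hcomp : IsCompact K)
    (h0 : 0 ∈ interior K)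
    (hconst : ∀ r : ℝ, r ∈ Ioo (0:ℝ) 1 → ∀ z w, μ (r • K + {z}) = μ (r • K + {w}))
    (C : Set (EuclideanSpace ℝ (Fin n))) (hC : IsCompact C)
    (v : EuclideanSpace ℝ (Fin n)) : μ (C + {v}) = μ C := by
  have half : ∀ (D : Set (EuclideanSpace ℝ (Fin n))), IsCompact D →
      ∀ w : EuclideanSpace ℝ (Fin n), μ D ≤ μ (D + {w}) := by
    intro D hD w
    have houter := Set.measure_eq_iInf_isOpen (D + {w}) μ
    rw [houter]
    refine le_iInf fun V => le_iInf fun hDV => le_iInf fun hV => ?_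
    have hsub : D ⊆ V + {-w} := by
      intro x hx
      refine ⟨x + w, hDV (Set.add_mem_add hx (Set.mem_singleton w)), -w, Set.mem_singleton _, add_neg_cancel_right x w⟩
    have hVw : (V + {-w}) + {w} = V := by
      rw [add_assoc, Set.singleton_add_singleton, neg_add_cancel, Set.add_singleton]
      simp
    have := compact_le_translate hn μ K hconv hcomp h0 hconst D (V + {-w}) hD
      (hV.add_right) hsub w
    rwa [hVw] at this
  refine le_antisymm ?_ (half C hC v)
  have h2 := half (C + {v}) (hC.add isCompact_singleton) (-v)
  have hid : (C + {v}) + {-v} = C := by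
    rw [add_assoc, Set.singleton_add_singleton, add_neg_cancel, Set.add_singleton]
    simp
  rwa [hid] at h2

lemma map_translate_eq (hn : 1 ≤ n) (μ : Measure (EuclideanSpace ℝ (Fin n)))
    [IsLocallyFiniteMeasure μ] [μ.Regular]
    (K : Set (EuclideanSpace ℝ (Fin n))) (hconv : Convex ℝ K) (hcomp : IsCompact K)
    (h0 : 0 ∈ interior K)
    (hconst : ∀ r : ℝ, r ∈ Ioo (0:ℝ) 1 → ∀ z w, μ (r • K + {z}) = μ (r • K + {w}))
    (v : EuclideanSpace ℝ (Fin n)) :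
    Measure.map (fun x => v + x) μ = μ := by
  have hmeq : (fun x : EuclideanSpace ℝ (Fin n) => v + x) = ⇑(Homeomorph.addLeft v) := rfl
  have hreg : (Measure.map (fun x : EuclideanSpace ℝ (Fin n) => v + x) μ).Regular := by
    rw [hmeq]; exact Measure.Regular.map (Homeomorph.addLeft v)
  set ν := Measure.map (fun x : EuclideanSpace ℝ (Fin n) => v + x) μ with hν
  have hmeasf : Measurable (fun x : EuclideanSpace ℝ (Fin n) => v + x) :=
    measurable_const_add v
  have hcompacts : ∀ D : Set (EuclideanSpace ℝ (Fin n)), IsCompact D → ν D = μ D := by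
    intro D hD
    rw [hν, Measure.map_apply hmeasf hD.measurableSet]
    have hpre : (fun x => v + x) ⁻¹' D = D + {-v} := by
      ext x
      simp only [Set.mem_preimage, Set.add_singleton, Set.mem_image]
      constructor
      · intro h; exact ⟨v + x, h, by abel⟩
      · rintro ⟨d, hd, rfl⟩
        have : v + (d + -v) = d := by abel
        rwa [this]
    rw [hpre]
    exact compact_translate_eq hn μ K hconv hcomp h0 hconst D hD (-v)
  have hopen : ∀ V : Set (EuclideanSpace ℝ (Fin n)), IsOpen V → ν V = μ V := by
    intro V hV
    rw [hV.measure_eq_iSup_isCompact ν, hV.measure_eq_iSup_isCompact μ]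
    congr! 4 with D hDV hD
    exact hcompacts D hD
  ext A hA
  rw [Set.measure_eq_iInf_isOpen A ν, Set.measure_eq_iInf_isOpen A μ]
  congr! 4 with V hAV hV
  exact hopen V hV

/-- If a Radon measure `μ` on `ℝⁿ`, `n ≥ 1`, satisfies, for some convex body `K`,
`μ(rK+z) + μ(rK+z+x+y) ≥ μ(rK+z+x) + μ(rK+z+y)` for all `x, y, z ∈ ℝⁿ` and all
`r ∈ (0,1)`, then `μ` is a constant multiple of the Lebesgue measure. -/
theorem supermodular_on_homothets_implies_lebesgue
    (n : ℕ) (hn : 1 ≤ n)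
    (μ : Measure (EuclideanSpace ℝ (Fin n))) [IsLocallyFiniteMeasure μ] [μ.Regular]
    (K : Set (EuclideanSpace ℝ (Fin n))) (hK : IsConvexBody K)
    (hsup : ∀ x y z : EuclideanSpace ℝ (Fin n), ∀ r : ℝ, r ∈ Ioo (0:ℝ) 1 →
      μ (r • K + ({z + x} : Set (EuclideanSpace ℝ (Fin n))))
        + μ (r • K + ({z + y} : Set (EuclideanSpace ℝ (Fin n))))
      ≤ μ (r • K + ({z} : Set (EuclideanSpace ℝ (Fin n))))
        + μ (r • K + ({z + x + y} : Set (EuclideanSpace ℝ (Fin n))))) :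
    ∃ c : NNReal, μ = c • (volume : Measure (EuclideanSpace ℝ (Fin n))) := by
  have hK' : Convex ℝ K ∧ IsCompact K ∧ (interior K).Nonempty := hK
  obtain ⟨hconv, hcomp, ⟨k₀, hk₀⟩⟩ := hK'
  -- translated body
  set L : Set (EuclideanSpace ℝ (Fin n)) := K + {-k₀} with hL
  have hLconv : Convex ℝ L := hconv.add (convex_singleton _)
  have hLcomp : IsCompact L := hcomp.add isCompact_singleton
  have hL0 : (0 : EuclideanSpace ℝ (Fin n)) ∈ interior L := by
    have himg : L = (Homeomorph.addRight (-k₀)) '' K := by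
      rw [hL, Set.add_singleton]; rfl
    rw [himg, ← Homeomorph.image_interior]
    exact ⟨k₀, hk₀, add_neg_cancel k₀⟩
  -- shift identity
  have hshift : ∀ (r : ℝ) (z : EuclideanSpace ℝ (Fin n)),
      r • L + {z} = r • K + {z - r • k₀} := by
    intro r z
    ext x
    simp only [Set.mem_add, Set.mem_smul_set, Set.mem_singleton_iff]
    constructor
    · rintro ⟨a, ⟨w, hw, rfl⟩, b, hb, rfl⟩
      rw [show b = z from hb]
      obtain ⟨k, hk, m, hm, rfl⟩ := hw
      rw [Set.mem_singleton_iff] at hm; subst hm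
      exact ⟨r • k, ⟨k, hk, rfl⟩, z - r • k₀, rfl, by rw [smul_add, smul_neg]; abel⟩
    · rintro ⟨a, ⟨k, hk, rfl⟩, b, hb, rfl⟩
      rw [show b = z - r • k₀ from hb]
      exact ⟨r • (k + -k₀), ⟨k + -k₀, ⟨k, hk, -k₀, Set.mem_singleton _, rfl⟩, rfl⟩,
        z, rfl, by rw [smul_add, smul_neg]; abel⟩
  -- constancy for homothets of L
  have hconst : ∀ r : ℝ, r ∈ Ioo (0:ℝ) 1 → ∀ z w : EuclideanSpace ℝ (Fin n),
      μ (r • L + {z}) = μ (r • L + {w}) := by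
    intro r hr z w
    refine measure_translate_const μ (r • L) (hLcomp.smul r) ?_ z w
    intro x y z'
    rw [hshift r (z' + x), hshift r (z' + y), hshift r z', hshift r (z' + x + y)]
    have e1 : z' + x - r • k₀ = (z' - r • k₀) + x := by abel
    have e2 : z' + y - r • k₀ = (z' - r • k₀) + y := by abel
    have e3 : z' + x + y - r • k₀ = (z' - r • k₀) + x + y := by abel
    rw [e1, e2, e3]
    exact hsup x y (z' - r • k₀) r hr
  -- translation invariance
  haveI : μ.IsAddLeftInvariant :=
    ⟨fun v => map_translate_eq hn μ L hLconv hLcomp hL0 hconst v⟩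
  exact ⟨Measure.addHaarScalarFactor μ volume, Measure.isAddLeftInvariant_eq_smul μ volume⟩
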